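/- Let 0 < a < b < ∞, let H : [a,b] → ℝ be strictly increasing, bounded and non-negative, and let G₁, G₂ : [a,b] → ℝ be continuous functions of bounded variation with G₁(b) = G₂(b) = 0. If G₁(x) < G₂(x) for all x ∈ [a,b), then ∫_a^b H(x) d[−G₁(x)] < ∫_a^b H(x) d[−G₂(x)], where the integrals are Riemann–Stieltjes integrals with respect to −G₁ and −G₂. -/

import Mathlib

open Set Filter

noncomputable section

/-- The Riemann–Stieltjes sum of `f` with respect to `g` for the tagged partition
given by points `t 0, t 1, ..., t n` with tags `ξ 0, ..., ξ (n-1)`. -/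
def rsSum (f g : ℝ → ℝ) (n : ℕ) (t ξ : ℕ → ℝ) : ℝ :=
  ∑ i ∈ Finset.range n, f (ξ i) * (g (t (i + 1)) - g (t i))

/-- `IsRSIntegral f g a b I` says that the Riemann–Stieltjes integral
`∫_a^b f(x) dg(x)` exists and equals `I`: for every `ε > 0` there is `δ > 0` such
that every tagged partition of `[a, b]` of mesh `< δ` has Riemann–Stieltjes sum
within `ε` of `I`. -/
def IsRSIntegral (f g : ℝ → ℝ) (a b I : ℝ) : Prop :=
  ∀ ε > 0, ∃ δ > 0, ∀ (n : ℕ) (t ξ : ℕ → ℝ),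
    t 0 = a → t n = b →
    (∀ i < n, t i ≤ t (i + 1)) →
    (∀ i < n, ξ i ∈ Set.Icc (t i) (t (i + 1))) →
    (∀ i < n, t (i + 1) - t i < δ) →
    |rsSum f g n t ξ - I| < ε

/-- `IsImproperRSIntegral f g a I` says that the improper Riemann–Stieltjes integral
`∫_a^∞ f(x) dg(x) = lim_{b→∞} ∫_a^b f(x) dg(x)` exists and equals `I`. -/
def IsImproperRSIntegral (f g : ℝ → ℝ) (a I : ℝ) : Prop :=
  ∃ F : ℝ → ℝ, (∀ b, a < b → IsRSIntegral f g a b (F b)) ∧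
    Filter.Tendsto F Filter.atTop (nhds I)

/-- Abel summation (summation by parts) for sums over `range (n+1)`. -/
lemma abel_sum_aux (f g : ℕ → ℝ) (n : ℕ) :
    ∑ i ∈ Finset.range (n + 1), f i * (g i - g (i + 1)) =
      f 0 * g 0 - f n * g (n + 1) +
        ∑ i ∈ Finset.range n, (f (i + 1) - f i) * g (i + 1) := by
  induction n with
  | zero => simp; ring
  | succ k ih =>
      rw [Finset.sum_range_succ, ih, Finset.sum_range_succ]
      ring

/-- Telescoping sum over `Finset.Ico`. -/
lemma telescope_Ico_aux (f : ℕ → ℝ) (m n : ℕ) (h : m ≤ n) :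
    ∑ i ∈ Finset.Ico m n, (f (i + 1) - f i) = f n - f m := by
  induction n, h using Nat.le_induction with
  | base => simp
  | succ k hk ih =>
      rw [Finset.sum_Ico_succ_top (by omega), ih]
      ring

/-- If `0 < a < b < ∞`, `H` is strictly increasing, bounded and
non-negative on `[a,b]`, `G₁, G₂` are continuous, of bounded variation on `[a,b]` with
`G₁ b = G₂ b = 0` and `G₁ < G₂` on `[a,b)`, then
`∫_a^b H(x) d[-G₁(x)] < ∫_a^b H(x) d[-G₂(x)]`. -/
theorem rs_monotone_strict_increasing
    (a b : ℝ) (ha : 0 < a) (hab : a < b)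
    (H G₁ G₂ : ℝ → ℝ) (I₁ I₂ : ℝ)
    (hH_mono : StrictMonoOn H (Set.Icc a b))
    (hH_bdd : ∃ M, ∀ x ∈ Set.Icc a b, |H x| ≤ M)
    (hH_nonneg : ∀ x ∈ Set.Icc a b, 0 ≤ H x)
    (hG₁_cont : ContinuousOn G₁ (Set.Icc a b))
    (hG₁_bv : BoundedVariationOn G₁ (Set.Icc a b))
    (hG₂_cont : ContinuousOn G₂ (Set.Icc a b))
    (hG₂_bv : BoundedVariationOn G₂ (Set.Icc a b))
    (hG₁_b : G₁ b = 0) (hG₂_b : G₂ b = 0)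
    (hlt : ∀ x ∈ Set.Ico a b, G₁ x < G₂ x)
    (hI₁ : IsRSIntegral H (fun x => -G₁ x) a b I₁)
    (hI₂ : IsRSIntegral H (fun x => -G₂ x) a b I₂) :
    I₁ < I₂ := by
  set D : ℝ → ℝ := fun x => G₂ x - G₁ x with hD
  have hDb : D b = 0 := by simp [hD, hG₁_b, hG₂_b]
  have hDpos : ∀ x ∈ Set.Ico a b, 0 < D x := fun x hx => sub_pos.2 (hlt x hx)
  have hDnonneg : ∀ x ∈ Set.Icc a b, 0 ≤ D x := by
    intro x hx
    rcases lt_or_eq_of_le hx.2 with h | h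
    · exact (hDpos x ⟨hx.1, h⟩).le
    · simp [h, hDb]
  have hDcont : ContinuousOn D (Set.Icc a b) := hG₂_cont.sub hG₁_cont
  set p := a + (b - a) / 3 with hp
  set q := a + 2 * ((b - a) / 3) with hq
  have hap : a < p := by simp [hp]; linarith
  have hpq : p < q := by simp [hp, hq]; linarith
  have hqb : q < b := by simp [hq]; linarith
  -- minimum of D on [p, q]
  obtain ⟨x₀, hx₀mem, hx₀min⟩ :=
    isCompact_Icc.exists_isMinOn (Set.nonempty_Icc.2 hpq.le)
      (hDcont.mono (Set.Icc_subset_Icc hap.le hqb.le))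
  set m := D x₀ with hm_def
  have hm : 0 < m :=
    hDpos x₀ ⟨le_trans hap.le hx₀mem.1, lt_of_le_of_lt hx₀mem.2 hqb⟩
  have hpmem : p ∈ Set.Icc a b := ⟨hap.le, (hpq.trans hqb).le⟩
  have hqmem : q ∈ Set.Icc a b := ⟨(hap.trans hpq).le, hqb.le⟩
  have hHpq : H p < H q := hH_mono hpmem hqmem hpq
  set gap := m * (H q - H p) with hgap_def
  have hgap : 0 < gap := mul_pos hm (sub_pos.2 hHpq)
  obtain ⟨δ₁, hδ₁, h1⟩ := hI₁ (gap / 4) (by positivity)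
  obtain ⟨δ₂, hδ₂, h2⟩ := hI₂ (gap / 4) (by positivity)
  set δ := min δ₁ δ₂ with hδdef
  have hδ : 0 < δ := lt_min hδ₁ hδ₂
  obtain ⟨N, hN⟩ := exists_nat_gt ((b - a) / δ / 3)
  have hN1 : 1 ≤ N := by
    by_contra h
    have : N = 0 := by omega
    rw [this] at hN
    have : 0 < (b - a) / δ / 3 := div_pos (div_pos (by linarith) hδ) (by norm_num)
    norm_num at hN
    linarith
  set n := 3 * N with hn
  have hn0 : 0 < n := by omega
  have hncast : (0 : ℝ) < (n : ℝ) := by exact_mod_cast hn0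
  set s := (b - a) / n with hs
  have hs0 : 0 < s := div_pos (by linarith) hncast
  have hsδ : s < δ := by
    rw [hs, div_lt_iff₀ hncast]
    have h3N : (b - a) / δ < 3 * N := by
      have := (div_lt_iff₀ (by norm_num : (0:ℝ) < 3)).1 hN
      calc (b - a) / δ = (b - a) / δ / 3 * 3 := by ring
        _ < N * 3 := by linarith
        _ = 3 * N := by ring
    have : (b - a) < 3 * N * δ := by
      rw [div_lt_iff₀ hδ] at h3N
      linarith
    calc b - a < 3 * N * δ := this
      _ = δ * n := by push_cast [hn]; ring
  set t : ℕ → ℝ := fun i => a + i * s with ht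
  have ht0 : t 0 = a := by simp [ht]
  have htn : t n = b := by
    simp only [ht]
    rw [hs]; field_simp; ring
  have htstep : ∀ i : ℕ, t (i + 1) - t i = s := by
    intro i
    simp only [ht]
    push_cast
    ring
  have htmono : Monotone t := by
    intro i j hij
    simp only [ht]
    have : (i : ℝ) ≤ j := by exact_mod_cast hij
    nlinarith
  have htmem : ∀ i ≤ n, t i ∈ Set.Icc a b := by
    intro i hi
    constructor
    · simp only [ht]
      have : 0 ≤ (i : ℝ) * s := mul_nonneg (Nat.cast_nonneg _) hs0.le
      linarith
    · rw [← htn]; exact htmono hi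
  have htN : t N = p := by
    simp only [ht, hp, hs, hn]
    have hNc : (0:ℝ) < (N:ℝ) := by exact_mod_cast (by omega : 0 < N)
    push_cast
    field_simp
  have ht2N : t (2 * N) = q := by
    simp only [ht, hq, hs, hn]
    have hNc : (0:ℝ) < (N:ℝ) := by exact_mod_cast (by omega : 0 < N)
    push_cast
    field_simp
  -- apply the integrability hypotheses to the uniform partition with left tags
  have hle : ∀ i < n, t i ≤ t (i + 1) := fun i _ => by
    rw [← sub_nonneg, htstep]; exact hs0.le
  have htag : ∀ i < n, t i ∈ Set.Icc (t i) (t (i + 1)) :=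
    fun i hi => ⟨le_refl _, hle i hi⟩
  have hmesh : ∀ i < n, t (i + 1) - t i < δ := fun i _ => by rw [htstep]; exact hsδ
  have hS1 := h1 n t t ht0 htn hle htag (fun i hi => (hmesh i hi).trans_le (min_le_left _ _))
  have hS2 := h2 n t t ht0 htn hle htag (fun i hi => (hmesh i hi).trans_le (min_le_right _ _))
  set S₁ := rsSum H (fun x => -G₁ x) n t t with hS₁def
  set S₂ := rsSum H (fun x => -G₂ x) n t t with hS₂def
  -- the difference of the two Riemann–Stieltjes sums
  have hdiff : S₂ - S₁ = ∑ i ∈ Finset.range n, H (t i) * (D (t i) - D (t (i + 1))) := by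
    rw [hS₁def, hS₂def, rsSum, rsSum, ← Finset.sum_sub_distrib]
    apply Finset.sum_congr rfl
    intro i _
    simp only [hD]
    ring
  obtain ⟨k, hk⟩ : ∃ k, n = k + 1 := ⟨3 * N - 1, by omega⟩
  have hk' : 3 * N = k + 1 := by rw [← hn]; exact hk
  have habel : S₂ - S₁ =
      H (t 0) * D (t 0) - H (t k) * D (t (k + 1)) +
        ∑ i ∈ Finset.range k, (H (t (i + 1)) - H (t i)) * D (t (i + 1)) := by
    rw [hdiff, hk, abel_sum_aux (fun i => H (t i)) (fun i => D (t i)) k]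
  have hDtn : D (t (k + 1)) = 0 := by rw [← hk, htn, hDb]
  have hterm_nonneg : ∀ i ∈ Finset.range k,
      0 ≤ (H (t (i + 1)) - H (t i)) * D (t (i + 1)) := by
    intro i hi
    rw [Finset.mem_range] at hi
    have hi' : i + 1 ≤ n := by omega
    apply mul_nonneg
    · rw [sub_nonneg]
      exact hH_mono.monotoneOn (htmem i (by omega)) (htmem (i + 1) hi')
        (htmono (Nat.le_succ i))
    · exact hDnonneg _ (htmem (i + 1) hi')
  -- lower bound via the block [t N, t 2N] = [p, q]
  have hsubset : Finset.Ico (N - 1) (2 * N) ⊆ Finset.range k := by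
    intro i hi
    obtain ⟨hi1, hi2⟩ := Finset.mem_Ico.1 hi
    exact Finset.mem_range.2 (by omega)
  have hblock : ∀ i ∈ Finset.Ico (N - 1) (2 * N),
      m * (H (t (i + 1)) - H (t i)) ≤ (H (t (i + 1)) - H (t i)) * D (t (i + 1)) := by
    intro i hi
    simp only [Finset.mem_Ico] at hi
    have hmem : t (i + 1) ∈ Set.Icc p q := by
      constructor
      · rw [← htN]; exact htmono (by omega)
      · rw [← ht2N]; exact htmono (by omega)
    have hHd : 0 ≤ H (t (i + 1)) - H (t i) := by
      rw [sub_nonneg]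
      exact hH_mono.monotoneOn (htmem i (by omega)) (htmem (i + 1) (by omega))
        (htmono (Nat.le_succ i))
    have := hx₀min hmem
    rw [mul_comm]
    exact mul_le_mul_of_nonneg_left this hHd
  have htele : ∑ i ∈ Finset.Ico (N - 1) (2 * N), (H (t (i + 1)) - H (t i)) =
      H (t (2 * N)) - H (t (N - 1)) :=
    telescope_Ico_aux (fun i => H (t i)) (N - 1) (2 * N) (by omega)
  have hsum_lb : gap ≤ ∑ i ∈ Finset.range k, (H (t (i + 1)) - H (t i)) * D (t (i + 1)) := by
    have h1' : ∑ i ∈ Finset.Ico (N - 1) (2 * N), (H (t (i + 1)) - H (t i)) * D (t (i + 1)) ≤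
        ∑ i ∈ Finset.range k, (H (t (i + 1)) - H (t i)) * D (t (i + 1)) :=
      Finset.sum_le_sum_of_subset_of_nonneg hsubset
        (fun i hi _ => hterm_nonneg i hi)
    have h2' : m * (H (t (2 * N)) - H (t (N - 1))) ≤
        ∑ i ∈ Finset.Ico (N - 1) (2 * N), (H (t (i + 1)) - H (t i)) * D (t (i + 1)) := by
      calc m * (H (t (2 * N)) - H (t (N - 1)))
          = ∑ i ∈ Finset.Ico (N - 1) (2 * N), m * (H (t (i + 1)) - H (t i)) := by
            rw [← Finset.mul_sum, htele]
        _ ≤ _ := Finset.sum_le_sum hblock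
    have h3' : gap ≤ m * (H (t (2 * N)) - H (t (N - 1))) := by
      rw [hgap_def, ht2N]
      apply mul_le_mul_of_nonneg_left _ hm.le
      have : t (N - 1) ≤ p := by rw [← htN]; exact htmono (by omega)
      have hHle : H (t (N - 1)) ≤ H p :=
        hH_mono.monotoneOn (htmem (N - 1) (by omega)) hpmem this
      linarith
    linarith
  have hHaDa : 0 ≤ H (t 0) * D (t 0) := by
    rw [ht0]
    exact mul_nonneg (hH_nonneg a (Set.left_mem_Icc.2 hab.le))
      (hDnonneg a (Set.left_mem_Icc.2 hab.le))
  have hSdiff : gap ≤ S₂ - S₁ := by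
    rw [habel, hDtn]
    linarith
  rw [abs_lt] at hS1 hS2
  linarith [hS1.1, hS1.2, hS2.1, hS2.2]
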